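/- The system Ẋ₁ = 0, Ẋ₂ = δ(Y₃ + aX₃), Ẋ₃ = −δ(Y₂ + aX₂), Ẏ₁ = (X₃Y₂ − X₂Y₃)/I₂, Ẏ₂ = (X₁Y₃ − X₃Y₁)/I₂ + aδY₃, Ẏ₃ = (X₂Y₁ − X₁Y₂)/I₂ − aδY₂ (where δ = √(X₀²+Z₀²) > 0 and a is any smooth function of (X,Y)) admits the four first integrals F₁ = X₁Y₁ + X₂Y₂ + X₃Y₃, F₂ = Y₁² + Y₂² + Y₃², H₁ = (X₁² + X₂² + X₃²)/(2I₂δ) + Y₁, and H₂ = X₁; i.e., each has zero derivative along any solution. -/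

import Mathlib

/-- The system on `e(3)` built from the Hess–Appel'rot Lax matrix (with an
arbitrary function `a`) admits the four first integrals
`F₁ = ⟨X,Y⟩`, `F₂ = ⟨Y,Y⟩`, `H₁ = |X|²/(2I₂δ) + Y₁`, `H₂ = X₁`. -/
theorem e3_family_four_first_integrals
    (I2 δ : ℝ) (hI2 : 0 < I2) (hδ : 0 < δ)
    (a : ℝ → ℝ) (X Y : ℝ → Fin 3 → ℝ)
    (hX : ∀ t, HasDerivAt X
      ![0, δ * (Y t 2 + a t * X t 2), -(δ * (Y t 1 + a t * X t 1))] t)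
    (hY : ∀ t, HasDerivAt Y
      ![(X t 2 * Y t 1 - X t 1 * Y t 2) / I2,
        (X t 0 * Y t 2 - X t 2 * Y t 0) / I2 + a t * δ * Y t 2,
        (X t 1 * Y t 0 - X t 0 * Y t 1) / I2 - a t * δ * Y t 1] t) :
    (∀ t, HasDerivAt (fun s => X s 0 * Y s 0 + X s 1 * Y s 1 + X s 2 * Y s 2) 0 t) ∧
    (∀ t, HasDerivAt (fun s => Y s 0 ^ 2 + Y s 1 ^ 2 + Y s 2 ^ 2) 0 t) ∧
    (∀ t, HasDerivAt (fun s =>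
        (X s 0 ^ 2 + X s 1 ^ 2 + X s 2 ^ 2) / (2 * I2 * δ) + Y s 0) 0 t) ∧
    (∀ t, HasDerivAt (fun s => X s 0) 0 t) := by
  have hI2' : I2 ≠ 0 := ne_of_gt hI2
  have hδ' : δ ≠ 0 := ne_of_gt hδ
  have hX0 : ∀ t, HasDerivAt (fun s => X s 0) 0 t := fun t => by
    simpa using hasDerivAt_pi.1 (hX t) 0
  have hX1 : ∀ t, HasDerivAt (fun s => X s 1)
      (δ * (Y t 2 + a t * X t 2)) t := fun t => by
    simpa using hasDerivAt_pi.1 (hX t) 1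
  have hX2 : ∀ t, HasDerivAt (fun s => X s 2)
      (-(δ * (Y t 1 + a t * X t 1))) t := fun t => by
    simpa using hasDerivAt_pi.1 (hX t) 2
  have hY0 : ∀ t, HasDerivAt (fun s => Y s 0)
      ((X t 2 * Y t 1 - X t 1 * Y t 2) / I2) t := fun t => by
    simpa using hasDerivAt_pi.1 (hY t) 0
  have hY1 : ∀ t, HasDerivAt (fun s => Y s 1)
      ((X t 0 * Y t 2 - X t 2 * Y t 0) / I2 + a t * δ * Y t 2) t := fun t => by
    simpa using hasDerivAt_pi.1 (hY t) 1
  have hY2 : ∀ t, HasDerivAt (fun s => Y s 2)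
      ((X t 1 * Y t 0 - X t 0 * Y t 1) / I2 - a t * δ * Y t 1) t := fun t => by
    simpa using hasDerivAt_pi.1 (hY t) 2
  refine ⟨fun t => ?_, fun t => ?_, fun t => ?_, fun t => hX0 t⟩
  · have := (((hX0 t).mul (hY0 t)).add ((hX1 t).mul (hY1 t))).add
      ((hX2 t).mul (hY2 t))
    refine this.congr_deriv ?_
    field_simp
    ring
  · have := (((hY0 t).pow 2).add ((hY1 t).pow 2)).add ((hY2 t).pow 2)
    refine this.congr_deriv ?_
    field_simp
    ring
  · have := ((((hX0 t).pow 2).add ((hX1 t).pow 2)).add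
      ((hX2 t).pow 2)).div_const (2 * I2 * δ) |>.add (hY0 t)
    refine this.congr_deriv ?_
    field_simp
    ring
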